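/- Fix d, h ∈ ℕ and set |Λ^n| := (2n)^d. Let {S^n}_{n∈ℕ} be an exponentially nearly additive ℝ^h-valued process, and suppose the process {S^n/|Λ^n|}_{n∈ℕ} satisfies an LDP with speed |Λ^n| and rate function I : ℝ^h → [0,∞]. Then I is convex: for all x₁, x₂ ∈ ℝ^h and t ∈ (0,1), t·I(x₁) + (1−t)·I(x₂) ≥ I(t·x₁ + (1−t)·x₂). -/

import Mathlib

open MeasureTheory Filter
open scoped ENNReal RealInnerProductSpace

namespace RandomCubical

variable {Ω : Type*} [MeasurableSpace Ω]

/-- `|Λ^n| = (2n)^d`. -/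
noncomputable def vol (d n : ℕ) : ℝ := (2 * (n : ℝ)) ^ d

/-- The lattice box `ℤ^d ∩ [-m, m]^d`. -/
noncomputable def box (d m : ℕ) : Finset (Fin d → ℤ) :=
  Fintype.piFinset fun _ => Finset.Icc (-(m : ℤ)) (m : ℤ)

/-- The conditions of exponential `r`-near additivity, for a given witness family
`T n z` (`z ∈ ℤ^d`) of independent copies of `S n`. -/
def ExpNAWitness (d h : ℕ) (P : Measure Ω) (S : ℕ → Ω → EuclideanSpace ℝ (Fin h))
    (r : ℕ) (T : ℕ → (Fin d → ℤ) → Ω → EuclideanSpace ℝ (Fin h)) : Prop :=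
  (∀ n, 1 ≤ n → ProbabilityTheory.iIndepFun (T n) P) ∧
  (∀ n, 1 ≤ n → ∀ z, ProbabilityTheory.IdentDistrib (T n z) (S n) P P) ∧
  ∀ ε > (0 : ℝ), ∀ C > (0 : ℝ), ∃ K : ℕ, r < K ∧ ∀ k, K ≤ k → ∀ m : ℕ, 1 ≤ m →
    P {ω | ε * vol d ((2 * m + 1) * k) <
        ‖S ((2 * m + 1) * k) ω - ∑ z ∈ box d m, T (k - r) z ω‖} ≤
      ENNReal.ofReal (Real.exp (-C * vol d ((2 * m + 1) * k)))

/-- Exponentially nearly additive process. -/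
def ExpNearlyAdditive (d h : ℕ) (P : Measure Ω)
    (S : ℕ → Ω → EuclideanSpace ℝ (Fin h)) : Prop :=
  ∃ r T, ExpNAWitness d h P S r T

/-- Exponentially regular process. -/
def ExpRegular (d h : ℕ) (P : Measure Ω) (S : ℕ → Ω → EuclideanSpace ℝ (Fin h)) : Prop :=
  ∀ k, 1 ≤ k → ∀ ε > (0 : ℝ), ∀ C > (0 : ℝ), ∃ N : ℕ, ∀ n, N ≤ n → ∀ m : ℕ,
    (2 * m + 1) * k ≤ n → n < (2 * m + 3) * k →
    P {ω | ε * vol d n < ‖S n ω - S ((2 * m + 1) * k) ω‖} ≤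
      ENNReal.ofReal (Real.exp (-C * vol d n))

/-- The (Donsker–Varadhan) large deviation principle with speed `a n` and rate function `I`. -/
def IsLDP {X : Type*} [TopologicalSpace X] (P : Measure Ω) (a : ℕ → ℝ)
    (T : ℕ → Ω → X) (I : X → ℝ≥0∞) : Prop :=
  LowerSemicontinuous I ∧
  (∀ F : Set X, IsClosed F →
    limsup (fun n => (((a n)⁻¹ : ℝ) : EReal) * ENNReal.log (P {ω | T n ω ∈ F})) atTop
      ≤ -((⨅ x ∈ F, I x : ℝ≥0∞) : EReal)) ∧
  (∀ G : Set X, IsOpen G →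
    -((⨅ x ∈ G, I x : ℝ≥0∞) : EReal)
      ≤ liminf (fun n => (((a n)⁻¹ : ℝ) : EReal) * ENNReal.log (P {ω | T n ω ∈ G})) atTop)

/-- Good rate function: lower semicontinuous with compact sublevel sets. -/
def GoodRate {X : Type*} [TopologicalSpace X] (I : X → ℝ≥0∞) : Prop :=
  LowerSemicontinuous I ∧ ∀ α : ℝ≥0∞, α ≠ ⊤ → IsCompact {x | I x ≤ α}

/-- Convexity for a `[0,∞]`-valued function on a real vector space. -/
def ENNConvex {V : Type*} [AddCommGroup V] [Module ℝ V] (I : V → ℝ≥0∞) : Prop :=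
  ∀ x y : V, ∀ t : ℝ, 0 < t → t < 1 →
    I (t • x + (1 - t) • y) ≤ ENNReal.ofReal t * I x + ENNReal.ofReal (1 - t) * I y

/-- The Fenchel–Legendre transform of `φ : ℝ^h → ℝ`, as a `[0,∞]`-valued function. -/
noncomputable def FL {h : ℕ} (φ : EuclideanSpace ℝ (Fin h) → ℝ)
    (x : EuclideanSpace ℝ (Fin h)) : ℝ≥0∞ :=
  ⨆ lam : EuclideanSpace ℝ (Fin h), ENNReal.ofReal (⟪lam, x⟫ - φ lam)

/-- `E[exp ⟪λ, S^n⟫]`, as an extended nonnegative real. -/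
noncomputable def expMoment {h : ℕ} (P : Measure Ω) (S : ℕ → Ω → EuclideanSpace ℝ (Fin h))
    (lam : EuclideanSpace ℝ (Fin h)) (n : ℕ) : ℝ≥0∞ :=
  ∫⁻ ω, ENNReal.ofReal (Real.exp ⟪lam, S n ω⟫) ∂P


section Aux

lemma log_helper1 {p : ℝ≥0∞} (hp1 : p ≤ 1) {b V : ℝ} (hV : 0 < V)
    (h : ENNReal.ofReal (Real.exp (b * V)) ≤ p) :
    (b : EReal) ≤ ((V⁻¹ : ℝ) : EReal) * ENNReal.log p := by
  have hp0 : p ≠ 0 := by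
    intro h0
    rw [h0, nonpos_iff_eq_zero, ENNReal.ofReal_eq_zero] at h
    exact absurd h (not_le.mpr (Real.exp_pos _))
  have hptop : p ≠ ⊤ := (lt_of_le_of_lt hp1 (by norm_num)).ne
  have hlb : ((b * V : ℝ) : EReal) ≤ ENNReal.log p := by
    have := ENNReal.log_monotone h
    rwa [ENNReal.log_ofReal_of_pos (Real.exp_pos _), Real.log_exp] at this
  have hub : ENNReal.log p ≤ 0 := by
    have := ENNReal.log_monotone hp1
    rwa [ENNReal.log_one] at this
  have hne_bot : ENNReal.log p ≠ ⊥ := by simpa using hp0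
  have hne_top : ENNReal.log p ≠ ⊤ := fun ht => by
    rw [ht] at hub; exact absurd hub (by simp)
  set c := (ENNReal.log p).toReal with hc
  have hcoe : ENNReal.log p = (c : EReal) := (EReal.coe_toReal hne_top hne_bot).symm
  rw [hcoe] at hlb ⊢
  rw [← EReal.coe_mul, EReal.coe_le_coe_iff] at *
  have hbc : b * V ≤ c := by exact_mod_cast hlb
  rw [inv_mul_eq_div, le_div_iff₀ hV]
  linarith

lemma log_helper2 {p : ℝ≥0∞} (hp1 : p ≤ 1) {b V : ℝ} (hV : 0 < V)
    (h : ((b : ℝ) : EReal) < ((V⁻¹ : ℝ) : EReal) * ENNReal.log p) :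
    ENNReal.ofReal (Real.exp (b * V)) ≤ p := by
  have hp0 : p ≠ 0 := by
    intro h0
    rw [h0, ENNReal.log_zero] at h
    have hVpos : (0:ℝ) < V⁻¹ := by positivity
    rw [EReal.coe_mul_bot_of_pos (by exact_mod_cast hVpos)] at h
    exact absurd h (by simp)
  have hptop : p ≠ ⊤ := (lt_of_le_of_lt hp1 (by norm_num)).ne
  have hub : ENNReal.log p ≤ 0 := by
    have := ENNReal.log_monotone hp1
    rwa [ENNReal.log_one] at this
  have hne_bot : ENNReal.log p ≠ ⊥ := by simpa using hp0
  have hne_top : ENNReal.log p ≠ ⊤ := fun ht => by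
    rw [ht] at hub; exact absurd hub (by simp)
  set c := (ENNReal.log p).toReal with hc
  have hcoe : ENNReal.log p = (c : EReal) := (EReal.coe_toReal hne_top hne_bot).symm
  rw [hcoe] at h
  rw [← EReal.coe_mul, EReal.coe_lt_coe_iff] at h
  have hbc : b * V < c := by
    rw [inv_mul_eq_div, lt_div_iff₀ hV] at h
    linarith
  have : Real.exp (b*V) ≤ Real.exp c := Real.exp_le_exp.mpr hbc.le
  calc ENNReal.ofReal (Real.exp (b*V)) ≤ ENNReal.ofReal (Real.exp c) := ENNReal.ofReal_le_ofReal this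
    _ = p := by
      have hlog : ENNReal.log p = Real.log p.toReal := by
        rw [ENNReal.log]
        simp [hp0, hptop]
      have hcval : c = Real.log p.toReal := by
        rw [hc, hlog]; simp
      rw [hcval, Real.exp_log (ENNReal.toReal_pos hp0 hptop), ENNReal.ofReal_toReal hptop]


lemma vol_pos {d n : ℕ} (hn : 1 ≤ n) : 0 < vol d n := by
  have h : (0:ℝ) < 2 * n := by
    have : (1:ℝ) ≤ n := by exact_mod_cast hn
    linarith
  exact pow_pos h d

lemma vol_nonneg (d n : ℕ) : 0 ≤ vol d n := by
  have : (0:ℝ) ≤ 2 * n := by positivity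
  exact pow_nonneg this d

lemma vol_mono (d : ℕ) : Monotone (vol d) := fun a b hab => by
  unfold vol
  have : (a:ℝ) ≤ b := by exact_mod_cast hab
  gcongr <;> linarith


lemma box_card (d m : ℕ) : (box d m).card = (2*m+1)^d := by
  simp only [box, Fintype.card_piFinset, Int.card_Icc, Finset.prod_const, Finset.card_univ,
    Fintype.card_fin]
  congr 1
  omega

lemma vol_mul (d a b : ℕ) : vol d (a*b) = (a:ℝ)^d * vol d b := by
  unfold vol
  push_cast
  ring

lemma self_le_vol {d n : ℕ} (hd : 1 ≤ d) : (n:ℝ) ≤ vol d n := by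
  rcases Nat.eq_zero_or_pos n with h | h
  · simp [h, vol_nonneg]
  · have h1 : (1:ℝ) ≤ n := by exact_mod_cast h
    calc (n:ℝ) ≤ 2*n := by linarith
    _ ≤ (2*(n:ℝ))^d := by
        apply le_self_pow₀ _ (by omega)
        have : (1:ℝ) ≤ n := by exact_mod_cast h
        linarith


lemma ennreal_le_ofReal_of_ereal {i : ℝ≥0∞} {L : ℝ} (h : ((-L : ℝ) : EReal) ≤ -(i : EReal)) :
    i ≤ ENNReal.ofReal L := by
  rw [EReal.coe_neg, EReal.neg_le_neg_iff] at h
  rw [← EReal.coe_ennreal_le_coe_ennreal_iff, EReal.coe_ennreal_ofReal]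
  refine h.trans ?_
  have : (L:EReal) ≤ ((max L 0 : ℝ) : EReal) := EReal.coe_le_coe_iff.mpr (le_max_left _ _)
  exact this

lemma eventually_ball_bound {Ω : Type*} [MeasurableSpace Ω] {d h : ℕ}
    {P : Measure Ω} [IsProbabilityMeasure P]
    {S : ℕ → Ω → EuclideanSpace ℝ (Fin h)} {I : EuclideanSpace ℝ (Fin h) → ℝ≥0∞}
    (hLB : ∀ G : Set (EuclideanSpace ℝ (Fin h)), IsOpen G →
      -((⨅ x ∈ G, I x : ℝ≥0∞) : EReal) ≤
        liminf (fun n => (((vol d n)⁻¹ : ℝ) : EReal) *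
          ENNReal.log (P {ω | (vol d n)⁻¹ • S n ω ∈ G})) atTop)
    (x : EuclideanSpace ℝ (Fin h)) (δ a : ℝ) (hδ : 0 < δ) (ha : I x < ENNReal.ofReal a) :
    ∃ N : ℕ, ∀ n, N ≤ n → 1 ≤ n →
      ENNReal.ofReal (Real.exp (-a * vol d n)) ≤
        P {ω | (vol d n)⁻¹ • S n ω ∈ Metric.ball x δ} := by
  have ha0 : 0 < a := by
    by_contra hc
    push_neg at hc
    rw [ENNReal.ofReal_eq_zero.mpr hc] at ha
    exact absurd ha (by simp)
  have h1 := hLB (Metric.ball x δ) Metric.isOpen_ball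
  have hinf : (⨅ w ∈ Metric.ball x δ, I w) ≤ I x := biInf_le _ (Metric.mem_ball_self hδ)
  have h2 : (-(a : ℝ) : EReal) < -((⨅ w ∈ Metric.ball x δ, I w : ℝ≥0∞) : EReal) := by
    rw [EReal.neg_lt_neg_iff]
    calc ((⨅ w ∈ Metric.ball x δ, I w : ℝ≥0∞) : EReal)
        < ((ENNReal.ofReal a : ℝ≥0∞) : EReal) := by
          rw [EReal.coe_ennreal_lt_coe_ennreal_iff]
          exact hinf.trans_lt ha
      _ = ((max a 0 : ℝ) : EReal) := by rw [EReal.coe_ennreal_ofReal]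
      _ ≤ (a : EReal) := by
          rw [EReal.coe_le_coe_iff, max_le_iff]
          exact ⟨le_rfl, ha0.le⟩
  have h3 : (-(a : ℝ) : EReal) <
      liminf (fun n => (((vol d n)⁻¹ : ℝ) : EReal) *
        ENNReal.log (P {ω | (vol d n)⁻¹ • S n ω ∈ Metric.ball x δ})) atTop :=
    h2.trans_le h1
  have hev := eventually_lt_of_lt_liminf h3
  rw [eventually_atTop] at hev
  obtain ⟨N, hN⟩ := hev
  refine ⟨N, fun n hn h1n => ?_⟩
  exact log_helper2 prob_le_one (vol_pos h1n) (hN n hn)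

set_option maxHeartbeats 2000000 in
lemma key_ineq {Ω : Type*} [MeasurableSpace Ω] (d h : ℕ) (hd : 1 ≤ d)
    (P : Measure Ω) [IsProbabilityMeasure P]
    (S : ℕ → Ω → EuclideanSpace ℝ (Fin h))
    (r : ℕ) (T' : ℕ → (Fin d → ℤ) → Ω → EuclideanSpace ℝ (Fin h))
    (hW : ExpNAWitness d h P S r T')
    (I : EuclideanSpace ℝ (Fin h) → ℝ≥0∞)
    (hldp : IsLDP P (vol d) (fun n ω => (vol d n)⁻¹ • S n ω) I)
    (x y : EuclideanSpace ℝ (Fin h)) (t : ℝ) (ht0 : 0 < t) (ht1 : t < 1)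
    (hIx : I x ≠ ⊤) (hIy : I y ≠ ⊤) (δ η : ℝ) (hδ : 0 < δ) (hη : 0 < η) (hη1 : η < 1) :
    (⨅ w ∈ Metric.closedBall (t • x + (1-t) • y) δ, I w) ≤
      ENNReal.ofReal (t * (I x).toReal + (1-t) * (I y).toReal + 3*η) := by
  obtain ⟨hInd, hId, hNA⟩ := hW
  obtain ⟨hlsc, hUB, hLB⟩ := hldp
  set z := t • x + (1-t) • y with hz
  set Ix := (I x).toReal with hIx'
  set Iy := (I y).toReal with hIy'
  have hIx0 : 0 ≤ Ix := ENNReal.toReal_nonneg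
  have hIy0 : 0 ≤ Iy := ENNReal.toReal_nonneg
  set ax := Ix + η with hax
  set ay := Iy + η with hay
  have hax0 : 0 < ax := by positivity
  have hay0 : 0 < ay := by positivity
  set L := t * ax + (1-t) * ay with hL
  have hL0 : 0 < L := by
    have h1t : 0 < 1 - t := by linarith
    positivity
  have hLval : L = t * Ix + (1-t) * Iy + η := by rw [hL, hax, hay]; ring
  -- Step D bounds
  obtain ⟨Nx, hNx⟩ := eventually_ball_bound hLB x (δ/4) ax (by linarith)
    (by rw [← ENNReal.ofReal_toReal hIx]
        exact ENNReal.ofReal_lt_ofReal_iff_of_nonneg hIx0 |>.mpr (by rw [hax]; linarith))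
  obtain ⟨Ny, hNy⟩ := eventually_ball_bound hLB y (δ/4) ay (by linarith)
    (by rw [← ENNReal.ofReal_toReal hIy]
        exact ENNReal.ofReal_lt_ofReal_iff_of_nonneg hIy0 |>.mpr (by rw [hay]; linarith))
  -- near additivity
  obtain ⟨K, hKr, hK⟩ := hNA (δ/4) (by linarith) (L+2) (by linarith)
  -- choice of k
  set c₀ : ℕ := ⌈(‖x‖ + ‖y‖ + δ/4 + 1) * 8 / δ⌉₊ + 1 with hc₀
  set k := K + Nx + Ny + d * r * c₀ with hkdef
  have hkK : K ≤ k := by omega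
  have hk1 : 1 ≤ k := by omega
  have hrk : r < k := lt_of_lt_of_le hKr hkK
  have hkr1 : 1 ≤ k - r := by omega
  have hkrNx : Nx ≤ k - r := by omega
  have hkrNy : Ny ≤ k - r := by omega
  -- the volume ratio bound : vol d (k-r) ≥ (1 - d*r/k) * vol d k
  have hρ : ∀ m : ℕ, True := fun _ => trivial
  set v := vol d (k - r) with hv
  set w := vol d k with hw
  have hv0 : 0 < v := vol_pos hkr1
  have hw0 : 0 < w := vol_pos hk1
  have hvw : v ≤ w := vol_mono d (by omega)
  have hratio : (1 - (d:ℝ)*r/k) * w ≤ v := by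
    have hk0 : (0:ℝ) < k := by exact_mod_cast hk1
    have hrk' : (r:ℝ) < k := by exact_mod_cast hrk
    have hcast : ((k - r : ℕ) : ℝ) = (k:ℝ) - r := by
      rw [Nat.cast_sub hrk.le]
    have hfrac0 : 0 ≤ 1 - (r:ℝ)/k := by
      rw [sub_nonneg, div_le_one hk0]; exact hrk'.le
    have hbern : 1 + (d:ℝ) * (-(r/k)) ≤ (1 + (-(r/k)))^d := by
      apply one_add_mul_le_pow
      have : (0:ℝ) ≤ r/k := by positivity
      linarith
    have hveq : v = w * (1 - (r:ℝ)/k)^d := by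
      rw [hv, hw, vol, vol, ← mul_pow, hcast]
      congr 1
      field_simp
    rw [hveq]
    have : 1 - (d:ℝ)*r/k ≤ (1 - (r:ℝ)/k)^d := by
      have h1 : (d:ℝ)*r/k = (d:ℝ)*(r/k) := by ring
      calc 1 - (d:ℝ)*r/k = 1 + (d:ℝ) * (-(r/k)) := by rw [h1]; ring
        _ ≤ (1 + (-(r/k)))^d := hbern
        _ = (1 - (r:ℝ)/k)^d := by ring_nf
    calc (1 - (d:ℝ)*r/k) * w ≤ (1 - (r:ℝ)/k)^d * w := by
          apply mul_le_mul_of_nonneg_right this hw0.le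
      _ = w * (1 - (r:ℝ)/k)^d := by ring
  have hratio2 : ((d:ℝ)*r/k) * (‖x‖ + ‖y‖ + δ/4) ≤ δ/8 := by
    set X := ‖x‖ + ‖y‖ + δ/4 with hX
    have hX0 : (0:ℝ) ≤ X := by rw [hX]; positivity
    have hk0 : (0:ℝ) < k := by exact_mod_cast hk1
    have hc₀v : (X + 1) * 8 / δ ≤ (c₀:ℝ) := by
      rw [hc₀]
      push_cast
      have := Nat.le_ceil ((‖x‖ + ‖y‖ + δ/4 + 1) * 8 / δ)
      rw [hX]
      linarith
    have hkge : (d:ℝ) * r * c₀ ≤ (k:ℝ) := by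
      have : d * r * c₀ ≤ k := by omega
      exact_mod_cast this
    have hdr0 : (0:ℝ) ≤ (d:ℝ) * r := by positivity
    rw [div_mul_eq_mul_div, div_le_iff₀ hk0]
    have e0 : δ/8 * ((X+1)*8/δ) = X + 1 := by field_simp
    have h1 : (d:ℝ)*r*X ≤ (d:ℝ)*r*(X+1) := mul_le_mul_of_nonneg_left (by linarith) hdr0
    have h3 : (d:ℝ)*r * (δ/8 * ((X+1)*8/δ)) ≤ (d:ℝ)*r*(δ/8 * c₀) :=
      mul_le_mul_of_nonneg_left (mul_le_mul_of_nonneg_left hc₀v (by positivity)) hdr0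
    have h5 : δ/8 * ((d:ℝ)*r*(c₀:ℝ)) ≤ δ/8 * k :=
      mul_le_mul_of_nonneg_left hkge (by positivity)
    calc (d:ℝ)*r*X ≤ (d:ℝ)*r*(X+1) := h1
      _ = (d:ℝ)*r * (δ/8 * ((X+1)*8/δ)) := by rw [e0]
      _ ≤ (d:ℝ)*r*(δ/8 * c₀) := h3
      _ = δ/8 * ((d:ℝ)*r*(c₀:ℝ)) := by ring
      _ ≤ δ/8 * k := h5
  clear_value z Ix Iy ax ay L c₀ k v w
  -- m₀
  set m₀ : ℕ := ⌈ay/η + 8*(‖x‖+‖y‖)/δ + 1/η⌉₊ + 1 with hm₀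
  clear_value m₀
  -- main estimate for each m ≥ m₀
  have main : ∀ m : ℕ, m₀ ≤ m →
      ((-(L + 2*η) : ℝ) : EReal) ≤
        (((vol d ((2*m+1)*k))⁻¹ : ℝ) : EReal) *
          ENNReal.log (P {ω | (vol d ((2*m+1)*k))⁻¹ • S ((2*m+1)*k) ω ∈ Metric.closedBall z δ}) := by
    intro m hm
    have hm1 : 1 ≤ m := by omega
    set n := (2*m+1)*k with hn
    have hn1 : 1 ≤ n := by
      rw [hn]
      exact Nat.one_le_iff_ne_zero.mpr (Nat.mul_ne_zero (by omega) (by omega))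
    set N : ℕ := (2*m+1)^d with hN
    have hNcard : (box d m).card = N := box_card d m
    have hN1 : 1 ≤ N := Nat.one_le_pow _ _ (by omega)
    have hN0 : (0:ℝ) < N := by exact_mod_cast hN1
    set V := vol d n with hV
    have hV0 : 0 < V := vol_pos hn1
    have hVNw : V = (N:ℝ) * w := by
      rw [hV, hn, vol_mul, hw, hN]
      push_cast
      ring
    -- consequences of m ≥ m₀
    have hmval : ay/η + 8*(‖x‖+‖y‖)/δ + 1/η ≤ (m:ℝ) := by
      have h1 := Nat.le_ceil (ay/η + 8*(‖x‖+‖y‖)/δ + 1/η)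
      have h2 : (m₀:ℝ) ≤ m := by exact_mod_cast hm
      rw [hm₀] at h2
      push_cast at h2
      linarith
    have hterm1 : 0 ≤ ay/η := by positivity
    have hterm2 : 0 ≤ 8*(‖x‖+‖y‖)/δ := by positivity
    have hterm3 : 0 ≤ 1/η := by positivity
    have hmN : (m:ℝ) ≤ N := by
      have h1 : 2*m+1 ≤ N := by
        have h0 : 2*m+1 ≤ (2*m+1)^d := Nat.le_self_pow (by omega) _
        omega
      have : (m:ℕ) ≤ N := by omega
      exact_mod_cast this
    have hayN : ay ≤ η * N := by
      have h1 : ay/η ≤ (N:ℝ) := by linarith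
      calc ay = η * (ay/η) := by field_simp
        _ ≤ η * N := by apply mul_le_mul_of_nonneg_left h1 hη.le
    have hxyN : (‖x‖+‖y‖) ≤ δ/8 * N := by
      have h1 : 8*(‖x‖+‖y‖)/δ ≤ (N:ℝ) := by linarith
      rw [div_le_iff₀ hδ] at h1
      linarith
    have hηV : 1 ≤ η * V := by
      have h1 : (1:ℝ)/η ≤ m := by linarith
      have h2 : (m:ℝ) ≤ n := by
        have : m ≤ n := by
          calc m ≤ 2*m+1 := by omega
            _ ≤ (2*m+1)*k := Nat.le_mul_of_pos_right _ (by omega)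
        exact_mod_cast this
      have h3 : (n:ℝ) ≤ V := self_le_vol hd
      have h4 : (1:ℝ)/η ≤ V := by linarith
      rw [div_le_iff₀ hη] at h4
      linarith
    clear_value n N V
    -- choose the subset A of size j
    set j := ⌊t * N⌋₊ with hj
    have hjle : (j:ℝ) ≤ t*N := Nat.floor_le (by positivity)
    have hjge : t*(N:ℝ) - 1 ≤ j := (Nat.sub_one_lt_floor _).le
    have hjN : j ≤ N := by
      have : (j:ℝ) ≤ N := by nlinarith
      exact_mod_cast this
    clear_value j
    obtain ⟨A, hAsub, hAcard⟩ := Finset.exists_subset_card_eq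
      (show j ≤ (box d m).card by rw [hNcard]; exact hjN)
    -- target sets
    set Bx : Set (EuclideanSpace ℝ (Fin h)) :=
      (fun u => (vol d (k-r))⁻¹ • u) ⁻¹' (Metric.ball x (δ/4)) with hBx
    set By : Set (EuclideanSpace ℝ (Fin h)) :=
      (fun u => (vol d (k-r))⁻¹ • u) ⁻¹' (Metric.ball y (δ/4)) with hBy
    have hBxm : MeasurableSet Bx :=
      (Metric.isOpen_ball.preimage (continuous_const_smul _)).measurableSet
    have hBym : MeasurableSet By :=
      (Metric.isOpen_ball.preimage (continuous_const_smul _)).measurableSet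
    set sets : (Fin d → ℤ) → Set (EuclideanSpace ℝ (Fin h)) :=
      fun z' => if z' ∈ A then Bx else By with hsets
    have hsetsm : ∀ z', MeasurableSet (sets z') := by
      intro z'
      rw [hsets]
      by_cases hzA : z' ∈ A <;> simp [hzA, hBxm, hBym]
    set E₀ : Set Ω := ⋂ z' ∈ box d m, T' (k-r) z' ⁻¹' (sets z') with hE₀
    have hPE : P E₀ = ∏ z' ∈ box d m, P (T' (k-r) z' ⁻¹' sets z') :=
      (hInd (k-r) hkr1).measure_inter_preimage_eq_mul (box d m) (fun i _ => hsetsm i)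
    -- per-factor lower bounds
    have hfac : ∀ z' ∈ box d m,
        ENNReal.ofReal (Real.exp ((if z' ∈ A then -ax else -ay) * v)) ≤
          P (T' (k-r) z' ⁻¹' sets z') := by
      intro z' _
      have hident := hId (k-r) hkr1 z'
      by_cases hzA : z' ∈ A
      · have heq : P (T' (k-r) z' ⁻¹' sets z') = P (S (k-r) ⁻¹' Bx) := by
          rw [hsets]
          simp only [if_pos hzA]
          exact hident.measure_mem_eq hBxm
        rw [if_pos hzA, heq, hv, hBx]
        exact hNx (k-r) hkrNx hkr1
      · have heq : P (T' (k-r) z' ⁻¹' sets z') = P (S (k-r) ⁻¹' By) := by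
          rw [hsets]
          simp only [if_neg hzA]
          exact hident.measure_mem_eq hBym
        rw [if_neg hzA, heq, hv, hBy]
        exact hNy (k-r) hkrNy hkr1
    -- product lower bound
    have hsum : ∑ z' ∈ box d m, (if z' ∈ A then -ax else -ay) * v
        = -((j:ℝ) * ax + ((N:ℝ) - j) * ay) * v := by
      rw [← Finset.sum_sdiff hAsub]
      have h1 : ∀ z' ∈ box d m \ A, (if z' ∈ A then -ax else -ay) * v = -ay * v := by
        intro z' hz'
        rw [Finset.mem_sdiff] at hz'
        rw [if_neg hz'.2]
      have h2 : ∀ z' ∈ A, (if z' ∈ A then -ax else -ay) * v = -ax * v := by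
        intro z' hz'
        rw [if_pos hz']
      rw [Finset.sum_congr rfl h1, Finset.sum_congr rfl h2, Finset.sum_const, Finset.sum_const,
        Finset.card_sdiff_of_subset hAsub, hNcard, hAcard]
      have hcast : ((N - j : ℕ) : ℝ) = (N:ℝ) - j := by
        rw [Nat.cast_sub hjN]
      simp only [nsmul_eq_mul, hcast]
      ring
    have hexp_le : (L + η) * V ≥ ((j:ℝ) * ax + ((N:ℝ) - j) * ay) * v := by
      have hjax : (j:ℝ) * ax ≤ t * N * ax := mul_le_mul_of_nonneg_right hjle hax0.le
      have hNj : (N:ℝ) - j ≤ (1-t)*N + 1 := by linarith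
      have hNjay : ((N:ℝ) - j) * ay ≤ ((1-t)*N + 1) * ay :=
        mul_le_mul_of_nonneg_right hNj hay0.le
      have he1 : (j:ℝ) * ax + ((N:ℝ) - j) * ay ≤ (N:ℝ) * L + ay := by
        rw [hL]; nlinarith
      have he2 : 0 ≤ (j:ℝ) * ax + ((N:ℝ) - j) * ay := by
        have : (0:ℝ) ≤ (N:ℝ) - j := by
          have : (j:ℝ) ≤ N := by exact_mod_cast hjN
          linarith
        positivity
      have he3 : ((j:ℝ) * ax + ((N:ℝ) - j) * ay) * v ≤ ((N:ℝ) * L + ay) * w := by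
        calc ((j:ℝ) * ax + ((N:ℝ) - j) * ay) * v ≤ ((j:ℝ) * ax + ((N:ℝ) - j) * ay) * w :=
              mul_le_mul_of_nonneg_left hvw he2
          _ ≤ ((N:ℝ) * L + ay) * w := mul_le_mul_of_nonneg_right he1 hw0.le
      have he4 : ((N:ℝ) * L + ay) * w ≤ (L + η) * V := by
        rw [hVNw]
        have : ay * w ≤ η * (N:ℝ) * w := mul_le_mul_of_nonneg_right hayN hw0.le
        nlinarith
      linarith
    have hprodE : ENNReal.ofReal (Real.exp (-(L+η) * V)) ≤ P E₀ := by
      rw [hPE]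
      calc ENNReal.ofReal (Real.exp (-(L+η) * V))
          ≤ ENNReal.ofReal (Real.exp (∑ z' ∈ box d m, (if z' ∈ A then -ax else -ay) * v)) := by
            apply ENNReal.ofReal_le_ofReal
            apply Real.exp_le_exp.mpr
            rw [hsum]
            linarith [hexp_le]
        _ = ∏ z' ∈ box d m, ENNReal.ofReal (Real.exp ((if z' ∈ A then -ax else -ay) * v)) := by
            rw [Real.exp_sum, ENNReal.ofReal_prod_of_nonneg]
            intro i _
            exact (Real.exp_pos _).le
        _ ≤ ∏ z' ∈ box d m, P (T' (k-r) z' ⁻¹' sets z') := Finset.prod_le_prod' hfac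
    -- the bad event
    have hbad := hK k hkK m hm1
    -- inclusion of the good event
    have hincl : E₀ \ {ω | δ/4 * vol d ((2*m+1)*k) <
          ‖S ((2*m+1)*k) ω - ∑ z' ∈ box d m, T' (k-r) z' ω‖} ⊆
        {ω | (vol d ((2*m+1)*k))⁻¹ • S ((2*m+1)*k) ω ∈ Metric.closedBall z δ} := by
      intro ω hω
      obtain ⟨hωE, hωbad⟩ := hω
      rw [hE₀] at hωE
      simp only [Set.mem_iInter] at hωE
      have hVeq : vol d ((2*m+1)*k) = V := by rw [hV, hn]
      set u : (Fin d → ℤ) → EuclideanSpace ℝ (Fin h) :=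
        fun z' => (vol d (k-r))⁻¹ • T' (k-r) z' ω with hu
      have hux : ∀ z' ∈ A, ‖u z' - x‖ < δ/4 := by
        intro z' hz'
        have h1 := hωE z' (hAsub hz')
        rw [hsets] at h1
        simp only [if_pos hz'] at h1
        rw [hBx] at h1
        have h2 := Metric.mem_ball.mp h1
        rwa [dist_eq_norm] at h2
      have huy : ∀ z' ∈ box d m \ A, ‖u z' - y‖ < δ/4 := by
        intro z' hz'
        rw [Finset.mem_sdiff] at hz'
        have h1 := hωE z' hz'.1
        rw [hsets] at h1
        simp only [if_neg hz'.2] at h1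
        rw [hBy] at h1
        have h2 := Metric.mem_ball.mp h1
        rwa [dist_eq_norm] at h2
      set su := ∑ z' ∈ box d m, u z' with hsu
      have hSsum : ∑ z' ∈ box d m, T' (k-r) z' ω = v • su := by
        rw [hsu, Finset.smul_sum]
        apply Finset.sum_congr rfl
        intro z' _
        rw [hu, smul_smul, hv, mul_inv_cancel₀ (vol_pos hkr1).ne', one_smul]
      have hbadc : ‖S ((2*m+1)*k) ω - ∑ z' ∈ box d m, T' (k-r) z' ω‖
          ≤ δ/4 * vol d ((2*m+1)*k) := not_lt.mp hωbad
      rw [hSsum, hVeq] at hbadc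
      -- the reference point q
      set q := (j:ℝ) • x + (((N - j : ℕ)):ℝ) • y with hq
      have hcastNj : ((N - j : ℕ):ℝ) = (N:ℝ) - j := Nat.cast_sub hjN
      -- su is close to q
      have hsum_x : ‖∑ z' ∈ A, u z' - (j:ℝ) • x‖ ≤ (j:ℝ) * (δ/4) := by
        have he : ∑ z' ∈ A, u z' - (j:ℝ) • x = ∑ z' ∈ A, (u z' - x) := by
          rw [Finset.sum_sub_distrib, Finset.sum_const, hAcard, Nat.cast_smul_eq_nsmul]
        rw [he]
        calc ‖∑ z' ∈ A, (u z' - x)‖ ≤ ∑ z' ∈ A, ‖u z' - x‖ := norm_sum_le _ _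
          _ ≤ ∑ _z' ∈ A, (δ/4) := Finset.sum_le_sum (fun z' hz' => (hux z' hz').le)
          _ = (j:ℝ) * (δ/4) := by rw [Finset.sum_const, hAcard, nsmul_eq_mul]
      have hsum_y : ‖∑ z' ∈ box d m \ A, u z' - (((N - j:ℕ)):ℝ) • y‖
          ≤ (((N - j:ℕ)):ℝ) * (δ/4) := by
        have hcard : (box d m \ A).card = N - j := by
          rw [Finset.card_sdiff_of_subset hAsub, hNcard, hAcard]
        have he : ∑ z' ∈ box d m \ A, u z' - (((N - j:ℕ)):ℝ) • y
            = ∑ z' ∈ box d m \ A, (u z' - y) := by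
          rw [Finset.sum_sub_distrib, Finset.sum_const, hcard, Nat.cast_smul_eq_nsmul]
        rw [he]
        calc ‖∑ z' ∈ box d m \ A, (u z' - y)‖ ≤ ∑ z' ∈ box d m \ A, ‖u z' - y‖ :=
              norm_sum_le _ _
          _ ≤ ∑ _z' ∈ box d m \ A, (δ/4) := Finset.sum_le_sum (fun z' hz' => (huy z' hz').le)
          _ = (((N - j:ℕ)):ℝ) * (δ/4) := by rw [Finset.sum_const, hcard, nsmul_eq_mul]
      have hsu_q : ‖su - q‖ ≤ (N:ℝ) * (δ/4) := by
        have hsplit : su - q = (∑ z' ∈ box d m \ A, u z' - (((N - j:ℕ)):ℝ) • y)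
            + (∑ z' ∈ A, u z' - (j:ℝ) • x) := by
          rw [hsu, hq, ← Finset.sum_sdiff hAsub]
          abel
        rw [hsplit]
        calc ‖_ + _‖ ≤ ‖∑ z' ∈ box d m \ A, u z' - (((N - j:ℕ)):ℝ) • y‖
              + ‖∑ z' ∈ A, u z' - (j:ℝ) • x‖ := norm_add_le _ _
          _ ≤ (((N - j:ℕ)):ℝ) * (δ/4) + (j:ℝ) * (δ/4) := add_le_add hsum_y hsum_x
          _ = (N:ℝ) * (δ/4) := by rw [hcastNj]; ring
      -- norm of su
      have hX0 : (0:ℝ) ≤ ‖x‖ + ‖y‖ + δ/4 := by positivity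
      have hsu_norm : ‖su‖ ≤ (N:ℝ) * (‖x‖ + ‖y‖ + δ/4) := by
        rw [hsu]
        calc ‖∑ z' ∈ box d m, u z'‖ ≤ ∑ z' ∈ box d m, ‖u z'‖ := norm_sum_le _ _
          _ ≤ ∑ _z' ∈ box d m, (‖x‖ + ‖y‖ + δ/4) := by
              apply Finset.sum_le_sum
              intro z' hz'
              by_cases hzA : z' ∈ A
              · have h1 := (hux z' hzA).le
                have h2 : ‖u z'‖ ≤ ‖u z' - x‖ + ‖x‖ := by
                  calc ‖u z'‖ = ‖(u z' - x) + x‖ := by rw [sub_add_cancel]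
                    _ ≤ ‖u z' - x‖ + ‖x‖ := norm_add_le _ _
                have h3 : (0:ℝ) ≤ ‖y‖ := norm_nonneg _
                linarith
              · have h1 := (huy z' (Finset.mem_sdiff.mpr ⟨hz', hzA⟩)).le
                have h2 : ‖u z'‖ ≤ ‖u z' - y‖ + ‖y‖ := by
                  calc ‖u z'‖ = ‖(u z' - y) + y‖ := by rw [sub_add_cancel]
                    _ ≤ ‖u z' - y‖ + ‖y‖ := norm_add_le _ _
                have h3 : (0:ℝ) ≤ ‖x‖ := norm_nonneg _
                linarith
          _ = (N:ℝ) * (‖x‖ + ‖y‖ + δ/4) := by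
              rw [Finset.sum_const, hNcard, nsmul_eq_mul]
      -- coefficient bounds
      have hNinv0 : (0:ℝ) < (N:ℝ)⁻¹ := by positivity
      have hγub : V⁻¹ * v ≤ (N:ℝ)⁻¹ := by
        rw [hVNw, mul_inv]
        have h1 : w⁻¹ * v ≤ 1 := by
          rw [inv_mul_le_iff₀ hw0, mul_one]
          exact hvw
        calc (N:ℝ)⁻¹ * w⁻¹ * v = (N:ℝ)⁻¹ * (w⁻¹ * v) := by ring
          _ ≤ (N:ℝ)⁻¹ * 1 := mul_le_mul_of_nonneg_left h1 hNinv0.le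
          _ = (N:ℝ)⁻¹ := mul_one _
      have hγlb : (N:ℝ)⁻¹ * (1 - (d:ℝ)*r/k) ≤ V⁻¹ * v := by
        rw [hVNw, mul_inv]
        have h1 : (1 - (d:ℝ)*r/k) ≤ w⁻¹ * v := by
          rw [inv_mul_eq_div, le_div_iff₀ hw0]
          exact hratio
        calc (N:ℝ)⁻¹ * (1 - (d:ℝ)*r/k) ≤ (N:ℝ)⁻¹ * (w⁻¹ * v) :=
              mul_le_mul_of_nonneg_left h1 hNinv0.le
          _ = (N:ℝ)⁻¹ * w⁻¹ * v := by ring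
      -- key pieces
      have key1 : ‖V⁻¹ • S ((2*m+1)*k) ω - V⁻¹ • (v • su)‖ ≤ δ/4 := by
        rw [← smul_sub, norm_smul, Real.norm_eq_abs, abs_of_pos (inv_pos.mpr hV0)]
        calc V⁻¹ * ‖S ((2*m+1)*k) ω - v • su‖ ≤ V⁻¹ * (δ/4 * V) :=
              mul_le_mul_of_nonneg_left hbadc (inv_pos.mpr hV0).le
          _ = δ/4 := by field_simp
      have key2 : ‖(V⁻¹ * v) • su - (N:ℝ)⁻¹ • su‖ ≤ δ/8 := by
        rw [← sub_smul, norm_smul, Real.norm_eq_abs]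
        have habs : |V⁻¹ * v - (N:ℝ)⁻¹| ≤ (N:ℝ)⁻¹ * ((d:ℝ)*r/k) := by
          rw [abs_le]
          constructor
          · have hexp : (N:ℝ)⁻¹ * (1 - (d:ℝ)*r/k) = (N:ℝ)⁻¹ - (N:ℝ)⁻¹*((d:ℝ)*r/k) := by
              ring
            rw [hexp] at hγlb
            linarith
          · have h1 : V⁻¹ * v - (N:ℝ)⁻¹ ≤ 0 := by linarith
            have h2 : (0:ℝ) ≤ (N:ℝ)⁻¹ * ((d:ℝ)*r/k) := by positivity
            linarith
        calc |V⁻¹ * v - (N:ℝ)⁻¹| * ‖su‖ ≤ ((N:ℝ)⁻¹ * ((d:ℝ)*r/k)) * ((N:ℝ) * (‖x‖ + ‖y‖ + δ/4)) := by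
              apply mul_le_mul habs hsu_norm (norm_nonneg _) (by positivity)
          _ = ((d:ℝ)*r/k) * (‖x‖ + ‖y‖ + δ/4) * ((N:ℝ)⁻¹ * N) := by ring
          _ = ((d:ℝ)*r/k) * (‖x‖ + ‖y‖ + δ/4) := by
              rw [inv_mul_cancel₀ (ne_of_gt hN0), mul_one]
          _ ≤ δ/8 := hratio2
      have hjNt : |(j:ℝ)/N - t| ≤ ((N:ℝ))⁻¹ := by
        have hjdiv : (j:ℝ)/N ≤ t := by
          rw [div_le_iff₀ hN0]
          exact hjle
        have h2 : t - (N:ℝ)⁻¹ ≤ (j:ℝ)/N := by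
          rw [le_div_iff₀ hN0, sub_mul, inv_mul_cancel₀ (ne_of_gt hN0)]
          exact hjge
        rw [abs_le]
        constructor
        · linarith
        · linarith [hNinv0.le]
      have key3 : ‖(N:ℝ)⁻¹ • su - z‖ ≤ δ/4 + δ/8 := by
        have hid : (N:ℝ)⁻¹ • su - z = (N:ℝ)⁻¹ • (su - q)
            + (((j:ℝ)/N - t) • x + ((((N - j:ℕ)):ℝ)/N - (1-t)) • y) := by
          rw [hq, hz, hcastNj]
          match_scalars <;> field_simp <;> ring
        rw [hid]
        have hn1' : ‖(N:ℝ)⁻¹ • (su - q)‖ ≤ δ/4 := by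
          rw [norm_smul, Real.norm_eq_abs, abs_of_pos hNinv0]
          calc (N:ℝ)⁻¹ * ‖su - q‖ ≤ (N:ℝ)⁻¹ * ((N:ℝ) * (δ/4)) :=
                mul_le_mul_of_nonneg_left hsu_q hNinv0.le
            _ = δ/4 * ((N:ℝ)⁻¹ * N) := by ring
            _ = δ/4 := by rw [inv_mul_cancel₀ (ne_of_gt hN0), mul_one]
        have hc2 : |(((N - j:ℕ)):ℝ)/N - (1-t)| = |(j:ℝ)/N - t| := by
          rw [hcastNj]
          rw [show ((N:ℝ) - j)/N - (1-t) = -((j:ℝ)/N - t) by field_simp; ring]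
          rw [abs_neg]
        have hn2' : ‖((j:ℝ)/N - t) • x + ((((N - j:ℕ)):ℝ)/N - (1-t)) • y‖
            ≤ (N:ℝ)⁻¹ * (‖x‖ + ‖y‖) := by
          calc ‖_ + _‖ ≤ ‖((j:ℝ)/N - t) • x‖ + ‖((((N - j:ℕ)):ℝ)/N - (1-t)) • y‖ :=
                norm_add_le _ _
            _ = |(j:ℝ)/N - t| * ‖x‖ + |(((N - j:ℕ)):ℝ)/N - (1-t)| * ‖y‖ := by
                rw [norm_smul, norm_smul, Real.norm_eq_abs, Real.norm_eq_abs]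
            _ ≤ (N:ℝ)⁻¹ * ‖x‖ + (N:ℝ)⁻¹ * ‖y‖ := by
                rw [hc2]
                apply add_le_add <;>
                  exact mul_le_mul_of_nonneg_right hjNt (norm_nonneg _)
            _ = (N:ℝ)⁻¹ * (‖x‖ + ‖y‖) := by ring
        have hxyN' : (N:ℝ)⁻¹ * (‖x‖ + ‖y‖) ≤ δ/8 := by
          calc (N:ℝ)⁻¹ * (‖x‖ + ‖y‖) ≤ (N:ℝ)⁻¹ * (δ/8 * N) :=
                mul_le_mul_of_nonneg_left hxyN hNinv0.le
            _ = δ/8 * ((N:ℝ)⁻¹ * N) := by ring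
            _ = δ/8 := by rw [inv_mul_cancel₀ (ne_of_gt hN0), mul_one]
        calc ‖_ + _‖ ≤ ‖(N:ℝ)⁻¹ • (su - q)‖
              + ‖((j:ℝ)/N - t) • x + ((((N - j:ℕ)):ℝ)/N - (1-t)) • y‖ := norm_add_le _ _
          _ ≤ δ/4 + (N:ℝ)⁻¹ * (‖x‖ + ‖y‖) := add_le_add hn1' hn2'
          _ ≤ δ/4 + δ/8 := by linarith
      -- final triangle inequality
      rw [Set.mem_setOf_eq, Metric.mem_closedBall, dist_eq_norm, hVeq]
      have hfin : V⁻¹ • S ((2*m+1)*k) ω - z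
          = (V⁻¹ • S ((2*m+1)*k) ω - V⁻¹ • (v • su))
            + ((V⁻¹ * v) • su - (N:ℝ)⁻¹ • su) + ((N:ℝ)⁻¹ • su - z) := by
        rw [smul_smul]
        abel
      calc ‖V⁻¹ • S ((2*m+1)*k) ω - z‖
          ≤ ‖(V⁻¹ • S ((2*m+1)*k) ω - V⁻¹ • (v • su))
              + ((V⁻¹ * v) • su - (N:ℝ)⁻¹ • su)‖ + ‖(N:ℝ)⁻¹ • su - z‖ := by
            rw [hfin]
            exact norm_add_le _ _
        _ ≤ ‖V⁻¹ • S ((2*m+1)*k) ω - V⁻¹ • (v • su)‖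
              + ‖(V⁻¹ * v) • su - (N:ℝ)⁻¹ • su‖ + ‖(N:ℝ)⁻¹ • su - z‖ := by
            apply add_le_add_left (norm_add_le _ _)
        _ ≤ δ/4 + δ/8 + (δ/4 + δ/8) := by
            apply add_le_add (add_le_add key1 key2) key3
        _ ≤ δ := by linarith

    -- probability of the goal event
    have hstep : P E₀ ≤ P {ω | (vol d ((2*m+1)*k))⁻¹ • S ((2*m+1)*k) ω ∈ Metric.closedBall z δ}
        + P {ω | δ/4 * vol d ((2*m+1)*k) <
            ‖S ((2*m+1)*k) ω - ∑ z' ∈ box d m, T' (k-r) z' ω‖} := by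
      set bad := {ω | δ/4 * vol d ((2*m+1)*k) <
            ‖S ((2*m+1)*k) ω - ∑ z' ∈ box d m, T' (k-r) z' ω‖} with hbaddef
      calc P E₀ ≤ P (E₀ ∩ badᶜ) + P (E₀ \ badᶜ) := measure_le_inter_add_diff P E₀ badᶜ
        _ ≤ _ := by
            apply add_le_add
            · apply measure_mono
              intro ω hω
              exact hincl ⟨hω.1, hω.2⟩
            · apply measure_mono
              intro ω hω
              rw [Set.mem_diff, Set.notMem_compl_iff] at hω
              exact hω.2
    have hPgoal : ENNReal.ofReal (Real.exp (-(L+2*η) * V)) ≤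
        P {ω | (vol d ((2*m+1)*k))⁻¹ • S ((2*m+1)*k) ω ∈ Metric.closedBall z δ} := by
      have h1 : ENNReal.ofReal (Real.exp (-(L+η) * V)) ≤
          P {ω | (vol d ((2*m+1)*k))⁻¹ • S ((2*m+1)*k) ω ∈ Metric.closedBall z δ}
          + ENNReal.ofReal (Real.exp (-(L+2) * V)) := by
        refine (hprodE.trans hstep).trans (add_le_add_right ?_ _)
        rw [hV, hn]
        exact hbad
      have h2 : ENNReal.ofReal (Real.exp (-(L+η) * V)) - ENNReal.ofReal (Real.exp (-(L+2) * V))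
          ≤ P {ω | (vol d ((2*m+1)*k))⁻¹ • S ((2*m+1)*k) ω ∈ Metric.closedBall z δ} :=
        tsub_le_iff_right.mpr h1
      refine le_trans ?_ h2
      rw [← ENNReal.ofReal_sub _ (Real.exp_pos _).le]
      apply ENNReal.ofReal_le_ofReal
      -- real inequality
      have e2le : Real.exp (-(L+2) * V) ≤ Real.exp (-(L+2*η) * V) := by
        apply Real.exp_le_exp.mpr
        nlinarith
      have eηV : (2:ℝ) ≤ Real.exp (η * V) := by
        have := Real.add_one_le_exp (η * V)
        linarith
      have eprod : Real.exp (-(L+2*η) * V) * Real.exp (η * V) = Real.exp (-(L+η) * V) := by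
        rw [← Real.exp_add]
        congr 1
        ring
      nlinarith [Real.exp_pos (-(L+2*η) * V), Real.exp_pos (-(L+η) * V)]
    -- conclude
    rw [hV, hn] at hPgoal hV0 ⊢
    exact log_helper1 prob_le_one hV0 hPgoal

  -- conclude via limsup
  have hfreq : ∃ᶠ n in atTop, ((-(L + 2*η) : ℝ) : EReal) ≤
      (((vol d n)⁻¹ : ℝ) : EReal) *
        ENNReal.log (P {ω | (vol d n)⁻¹ • S n ω ∈ Metric.closedBall z δ}) := by
    rw [frequently_atTop]
    intro M
    refine ⟨(2 * (max m₀ M) + 1) * k, ?_, main _ (le_max_left _ _)⟩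
    calc M ≤ max m₀ M := le_max_right _ _
      _ ≤ 2 * (max m₀ M) + 1 := by omega
      _ ≤ (2 * (max m₀ M) + 1) * k := Nat.le_mul_of_pos_right _ (by omega)
  have hls := le_limsup_of_frequently_le' hfreq
  have hub := hUB (Metric.closedBall z δ) Metric.isClosed_closedBall
  have hfin : ((-(L + 2*η) : ℝ) : EReal) ≤ -((⨅ w ∈ Metric.closedBall z δ, I w : ℝ≥0∞) : EReal) := by
    refine hls.trans ?_
    convert hub using 2
  have := ennreal_le_ofReal_of_ereal hfin
  refine this.trans (ENNReal.ofReal_le_ofReal ?_)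
  rw [hLval]; linarith

end Aux

theorem rate_convex_of_expNearlyAdditive
    (d h : ℕ) (hd : 1 ≤ d) (hh : 1 ≤ h)
    (P : Measure Ω) [IsProbabilityMeasure P]
    (S : ℕ → Ω → EuclideanSpace ℝ (Fin h)) (hmeas : ∀ n, Measurable (S n))
    (hadd : ExpNearlyAdditive d h P S)
    (I : EuclideanSpace ℝ (Fin h) → ℝ≥0∞)
    (hldp : IsLDP P (vol d) (fun n ω => (vol d n)⁻¹ • S n ω) I) :
    ENNConvex I := by
  intro x y t ht0 ht1
  obtain ⟨r, T', hW⟩ := hadd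
  by_cases hIx : I x = ⊤
  · have h0 : ENNReal.ofReal t ≠ 0 := by
      simp only [ne_eq, ENNReal.ofReal_eq_zero, not_le]
      linarith
    rw [hIx, ENNReal.mul_top h0, top_add]
    exact le_top
  by_cases hIy : I y = ⊤
  · have h0 : ENNReal.ofReal (1-t) ≠ 0 := by
      simp only [ne_eq, ENNReal.ofReal_eq_zero, not_le]
      linarith
    rw [hIy, ENNReal.mul_top h0, add_top]
    exact le_top
  have hδclaim : ∀ δ : ℝ, 0 < δ →
      (⨅ w ∈ Metric.closedBall (t • x + (1-t) • y) δ, I w) ≤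
        ENNReal.ofReal t * I x + ENNReal.ofReal (1-t) * I y := by
    intro δ hδ
    have hbase_eq : ENNReal.ofReal t * I x + ENNReal.ofReal (1-t) * I y
        = ENNReal.ofReal (t * (I x).toReal + (1-t) * (I y).toReal) := by
      rw [ENNReal.ofReal_add (by positivity) (by
            have h1 : (0:ℝ) ≤ 1 - t := by linarith
            positivity),
        ENNReal.ofReal_mul ht0.le, ENNReal.ofReal_mul (by linarith : (0:ℝ) ≤ 1 - t),
        ENNReal.ofReal_toReal hIx, ENNReal.ofReal_toReal hIy]
    rw [hbase_eq]
    apply ENNReal.le_of_forall_pos_le_add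
    intro ε hε _
    set η := min ((ε:ℝ)/6) (1/2) with hηdef
    have hε' : (0:ℝ) < ε := hε
    have hη : 0 < η := by
      rw [hηdef]
      apply lt_min (by linarith) (by norm_num)
    have hη1 : η < 1 := by
      rw [hηdef]
      calc min ((ε:ℝ)/6) (1/2) ≤ 1/2 := min_le_right _ _
        _ < 1 := by norm_num
    have hkey := key_ineq d h hd P S r T' hW I hldp x y t ht0 ht1 hIx hIy δ η hδ hη hη1
    refine hkey.trans ?_
    calc ENNReal.ofReal (t * (I x).toReal + (1-t) * (I y).toReal + 3*η)
        ≤ ENNReal.ofReal (t * (I x).toReal + (1-t) * (I y).toReal) + ENNReal.ofReal (3*η) :=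
          ENNReal.ofReal_add_le
      _ ≤ ENNReal.ofReal (t * (I x).toReal + (1-t) * (I y).toReal) + (ε : ℝ≥0∞) := by
          apply add_le_add_right
          apply ENNReal.ofReal_le_of_le_toReal
          rw [ENNReal.coe_toReal]
          have : η ≤ (ε:ℝ)/6 := by rw [hηdef]; exact min_le_left _ _
          linarith
  -- conclude via lower semicontinuity
  by_contra hcon
  push_neg at hcon
  obtain ⟨c, hc1, hc2⟩ := exists_between hcon
  have hev := hldp.1 (t • x + (1-t) • y) c hc2
  rw [Metric.eventually_nhds_iff] at hev
  obtain ⟨ε, hε0, hball⟩ := hev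
  have hinf := hδclaim (ε/2) (by linarith)
  have hge : c ≤ ⨅ w ∈ Metric.closedBall (t • x + (1-t) • y) (ε/2), I w := by
    apply le_iInf₂
    intro w hw
    apply le_of_lt
    apply hball
    calc dist w (t • x + (1-t) • y) ≤ ε/2 := Metric.mem_closedBall.mp hw
      _ < ε := by linarith
  exact absurd (hge.trans hinf) (not_le.mpr hc1)


end RandomCubical
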